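/- Fix x* ∈ ℝ, b* > 0, β ≥ 0, A > 0 and p > 1. Every solution (x(t), y(t)) of the system [p(x−x*) + βA] x' = y' [(1−p)(y−b*) + A] with y(t*) = b*, x(t*) = x* lies on the ellipse p·[x − x* + βA/p]² + (p−1)·[y − b* − A/(p−1)]² = (β²/p + 1/(p−1))·A². -/
import Mathlib

theorem stmt_10 (xs bs beta A p : ℝ) (ts : ℝ)
    (hbs : 0 < bs) (hbeta : 0 ≤ beta) (hA : 0 < A) (hp : 1 < p)
    (x y x' y' : ℝ → ℝ)
    (hx : ∀ t, HasDerivAt x (x' t) t) (hy : ∀ t, HasDerivAt y (y' t) t)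
    (hode : ∀ t, (p*(x t - xs) + beta*A) * x' t = y' t * ((1-p)*(y t - bs) + A))
    (hxts : x ts = xs) (hyts : y ts = bs) :
    ∀ t : ℝ,
      p * (x t - xs + beta*A/p)^2 + (p-1) * (y t - bs - A/(p-1))^2
        = (beta^2/p + 1/(p-1)) * A^2 := by
  have hp0 : p ≠ 0 := by positivity
  have hp1 : p - 1 ≠ 0 := by linarith
  set F : ℝ → ℝ := fun t =>
    p * (x t - xs + beta*A/p)^2 + (p-1) * (y t - bs - A/(p-1))^2 with hF
  have hF' : ∀ t, HasDerivAt F 0 t := by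
    intro t
    have h1 : HasDerivAt (fun t => p * (x t - xs + beta*A/p)^2 + (p-1) * (y t - bs - A/(p-1))^2)
        (p * (2 * (x t - xs + beta*A/p) * x' t) + (p-1) * (2 * (y t - bs - A/(p-1)) * y' t)) t := by
      apply HasDerivAt.add
      · exact (((hx t).sub_const xs).add_const _).pow 2 |>.const_mul p |>.congr_deriv (by ring)
      · exact (((hy t).sub_const bs).sub_const _).pow 2 |>.const_mul (p-1) |>.congr_deriv (by ring)
    have key : p * (2 * (x t - xs + beta*A/p) * x' t) + (p-1) * (2 * (y t - bs - A/(p-1)) * y' t) = 0 := by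
      have h := hode t
      field_simp
      nlinarith [h]
    rw [key] at h1
    exact h1
  have hconst : ∀ t, F t = F ts := by
    intro t
    have : ∀ s : ℝ, deriv F s = 0 := fun s => (hF' s).deriv
    exact is_const_of_deriv_eq_zero (fun s => (hF' s).differentiableAt) this t ts
  intro t
  have := hconst t
  simp only [hF] at this
  rw [this, hxts, hyts]
  field_simp
  ring
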